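/- Let Ā ∈ ℂ^{n×n}, F̄ ∈ ℂ^{n×m}, Ω̄ ∈ ℂ^{m×m}, C̄ ∈ ℂ^{p×n}, H̄ ∈ ℂ^{q×n} be complex matrices, and define 𝒜 = [[Ā, −F̄],[0, Ω̄]] and 𝒞 = [[C̄, 0],[H̄, 0]]. If the pair (𝒜, 𝒞) is detectable, then the pair (Ω̄, F̄) is detectable. -/
import Mathlib

open Matrix

/-- PBH detectability of a matrix pair. -/
def Detectable {k r : Type} [Fintype k] (M : Matrix k k ℂ) (C : Matrix r k ℂ) : Prop :=
  ∀ s : ℂ, 0 ≤ s.re → ∀ x : k → ℂ, M.mulVec x = s • x → C.mulVec x = 0 → x = 0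

theorem stmt_3 {n m p q : ℕ}
    (Abar : Matrix (Fin n) (Fin n) ℂ) (Fbar : Matrix (Fin n) (Fin m) ℂ)
    (Ωbar : Matrix (Fin m) (Fin m) ℂ) (Cbar : Matrix (Fin p) (Fin n) ℂ)
    (Hbar : Matrix (Fin q) (Fin n) ℂ)
    (hdet : Detectable (Matrix.fromBlocks Abar (-Fbar) 0 Ωbar)
      (Matrix.fromBlocks Cbar 0 Hbar 0)) :
    Detectable Ωbar Fbar := by
  intro s hs x hΩ hF
  have hy := hdet s hs (Sum.elim 0 x) ?_ ?_
  · funext i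
    have := congrFun hy (Sum.inr i)
    simpa using this
  · funext i
    cases i with
    | inl i =>
      simp [fromBlocks_mulVec, mulVec_zero, Matrix.neg_mulVec, hF]
    | inr i =>
      simp [fromBlocks_mulVec, mulVec_zero, congrFun hΩ i]
  · funext i
    cases i with
    | inl i => simp [fromBlocks_mulVec, mulVec_zero]
    | inr i => simp [fromBlocks_mulVec, mulVec_zero]
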